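/- Let Q : [−1, K] → (0, ∞) be continuous with Q(0) = 1, Q(t) ≤ 1 for t ∈ [−1, 0], and suppose the curvature scale F (defined by F(t₀) = sup{s > 0 : sup_{[t₀−s,t₀]} Q² ≤ s^{−1}}) satisfies F(0) = 1. Suppose Q has upper Dini derivative d⁺Q/dt at t = 0. Then the lower Dini derivative of F at 0 satisfies d⁻F/dt(0) ≥ min{0, −2·(d⁺Q/dt)(0)}. -/

import Mathlib

open Filter Set

/-- The lower Dini derivative `d⁻/dt f(t) = liminf_{ε→0⁺} (f(t+ε)−f(t))/ε`. -/
noncomputable def diniLower (f : ℝ → ℝ) (t : ℝ) : ℝ :=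
  liminf (fun ε => (f (t + ε) - f t) / ε) (nhdsWithin 0 (Ioi 0))

/-- The upper Dini derivative `d⁺/dt f(t) = limsup_{ε→0⁺} (f(t+ε)−f(t))/ε`. -/
noncomputable def diniUpper (f : ℝ → ℝ) (t : ℝ) : ℝ :=
  limsup (fun ε => (f (t + ε) - f t) / ε) (nhdsWithin 0 (Ioi 0))

lemma aux_prod1 (a b δ ε : ℝ) (ha0 : 0 < a) (hb0 : 0 < b) (hδ : 0 < δ)
    (h2ab : 2*a - b = -(δ/2)) (hε0 : 0 < ε)
    (hεD : ε * (a^2 + 2*a*b + a^2*b + 1) ≤ δ/2) :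
    (1 + a*ε)^2 * (1 - b*ε) ≤ 1 := by
  nlinarith [mul_le_mul_of_nonneg_left hεD hε0.le,
    mul_nonneg (mul_nonneg ha0.le hb0.le) (mul_nonneg hε0.le hε0.le),
    mul_nonneg (mul_nonneg (mul_nonneg ha0.le ha0.le) hb0.le)
      (mul_nonneg (mul_nonneg hε0.le hε0.le) hε0.le),
    mul_nonneg hε0.le hε0.le]

lemma aux_inv2 (x : ℝ) (hx0 : 0 ≤ x) (hx1 : x ≤ 1) :
    ((1 + x)^2)⁻¹ ≤ 1 - (3/4) * x := by
  rw [← one_div, div_le_iff₀ (by positivity)]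
  nlinarith [mul_nonneg hx0 (sub_nonneg.mpr hx1),
    mul_nonneg (mul_nonneg hx0 hx0) (sub_nonneg.mpr hx1)]

theorem stmt13 (K : ℝ) (hK : 0 ≤ K) (Q : ℝ → ℝ)
    (hQc : ContinuousOn Q (Set.Icc (-1) K)) (hQpos : ∀ t, 0 < Q t)
    (hQ0 : Q 0 = 1) (hQle : ∀ t ∈ Set.Icc (-1:ℝ) 0, Q t ≤ 1)
    (F : ℝ → ℝ)
    (hFdef : ∀ t₀ : ℝ,
      F t₀ = sSup {s : ℝ | 0 < s ∧ ∀ t ∈ Set.Icc (t₀ - s) t₀, Q t ^ 2 ≤ s⁻¹})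
    (hF0 : F 0 = 1) :
    min 0 (-2 * diniUpper Q 0) ≤ diniLower F 0 := by
  classical
  have hdl : diniLower F 0
      = sSup {a : ℝ | ∀ᶠ ε in nhdsWithin (0:ℝ) (Ioi 0), a ≤ (F (0 + ε) - F 0) / ε} := by
    rw [diniLower, liminf_eq]
  -- F is bounded above by (Q t₀)⁻²
  have hFub : ∀ t₀ : ℝ, F t₀ ≤ ((Q t₀) ^ 2)⁻¹ := by
    intro t₀
    rw [hFdef t₀]
    refine Real.sSup_le ?_ (by positivity)
    rintro s ⟨hs, h⟩
    have h1 : Q t₀ ^ 2 ≤ s⁻¹ := h t₀ ⟨by linarith, le_refl _⟩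
    have h2 : (s⁻¹)⁻¹ ≤ (Q t₀ ^ 2)⁻¹ := inv_anti₀ (pow_pos (hQpos t₀) 2) h1
    rwa [inv_inv] at h2
  have hFbdd : ∀ t₀ : ℝ,
      BddAbove {s : ℝ | 0 < s ∧ ∀ t ∈ Set.Icc (t₀ - s) t₀, Q t ^ 2 ≤ s⁻¹} := by
    intro t₀
    refine ⟨((Q t₀) ^ 2)⁻¹, ?_⟩
    rintro s ⟨hs, h⟩
    have h1 : Q t₀ ^ 2 ≤ s⁻¹ := h t₀ ⟨by linarith, le_refl _⟩
    have h2 : (s⁻¹)⁻¹ ≤ (Q t₀ ^ 2)⁻¹ := inv_anti₀ (pow_pos (hQpos t₀) 2) h1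
    rwa [inv_inv] at h2
  by_cases hbd : BddAbove {a : ℝ | ∀ᶠ ε in nhdsWithin (0:ℝ) (Ioi 0), a ≤ (F (0 + ε) - F 0) / ε}
  · by_cases hb : IsBoundedUnder (· ≤ ·) (nhdsWithin (0:ℝ) (Ioi 0))
        (fun ε => (Q (0 + ε) - Q 0) / ε)
    · -- main case
      obtain ⟨c, hc⟩ : ∃ c : ℝ, c = max (diniUpper Q 0) 0 := ⟨_, rfl⟩
      have hc0 : (0:ℝ) ≤ c := hc ▸ le_max_right _ _
      have hcL : diniUpper Q 0 ≤ c := hc ▸ le_max_left _ _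
      have hm : min 0 (-2 * diniUpper Q 0) = -2 * c := by
        rcases le_total (diniUpper Q 0) 0 with h | h
        · rw [min_eq_left (by linarith), hc, max_eq_right h]; ring
        · rw [min_eq_right (by linarith), hc, max_eq_left h]
      rw [hm, hdl]
      refine le_of_forall_pos_le_add ?_
      intro δ hδ
      obtain ⟨a, ha⟩ : ∃ a : ℝ, a = c + δ/4 := ⟨_, rfl⟩
      obtain ⟨b, hbdef⟩ : ∃ b : ℝ, b = 2*c + δ := ⟨_, rfl⟩
      have ha0 : 0 < a := by rw [ha]; linarith
      have hb0 : 0 < b := by rw [hbdef]; linarith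
      have h2ab : 2*a - b = -(δ/2) := by rw [ha, hbdef]; ring
      have hD0 : 0 < a^2 + 2*a*b + a^2*b + 1 := by positivity
      have hev : ∀ᶠ ε in nhdsWithin (0:ℝ) (Ioi 0), -2*c - δ ≤ (F (0 + ε) - F 0) / ε := by
        -- eventual upper bound on the difference quotient of Q
        have hlt : limsup (fun ε => (Q (0 + ε) - Q 0) / ε) (nhdsWithin (0:ℝ) (Ioi 0)) < a := by
          have heq : limsup (fun ε => (Q (0 + ε) - Q 0) / ε) (nhdsWithin (0:ℝ) (Ioi 0))
              = diniUpper Q 0 := rfl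
          rw [heq, ha]; linarith
        have hub := eventually_lt_of_limsup_lt hlt hb
        obtain ⟨η, hη, hsub⟩ := mem_nhdsGT_iff_exists_Ioo_subset.mp hub
        have hη0 : (0:ℝ) < η := hη
        obtain ⟨ε₀, hε₀⟩ : ∃ e : ℝ,
            e = min (min η 1) (min (1/(2*b)) ((δ/2)/(a^2 + 2*a*b + a^2*b + 1))) := ⟨_, rfl⟩
        have hε₀0 : 0 < ε₀ := by
          rw [hε₀]
          exact lt_min (lt_min hη0 one_pos) (lt_min (by positivity) (by positivity))
        refine mem_nhdsGT_iff_exists_Ioo_subset.mpr ⟨ε₀, hε₀0, ?_⟩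
        rintro ε ⟨hε0, hεε₀⟩
        rw [hε₀] at hεε₀
        have hεη : ε < η := lt_of_lt_of_le hεε₀ ((min_le_left _ _).trans (min_le_left _ _))
        have hε1 : ε ≤ 1 :=
          le_of_lt (lt_of_lt_of_le hεε₀ ((min_le_left _ _).trans (min_le_right _ _)))
        have hεb : ε ≤ 1/(2*b) :=
          le_of_lt (lt_of_lt_of_le hεε₀ ((min_le_right _ _).trans (min_le_left _ _)))
        have hεD : ε ≤ (δ/2)/(a^2 + 2*a*b + a^2*b + 1) :=
          le_of_lt (lt_of_lt_of_le hεε₀ ((min_le_right _ _).trans (min_le_right _ _)))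
        have hεD' : ε * (a^2 + 2*a*b + a^2*b + 1) ≤ δ/2 := by
          rw [le_div_iff₀ hD0] at hεD; exact hεD
        have hbε : b * ε ≤ 1/2 := by
          have h1 := mul_le_mul_of_nonneg_left hεb (le_of_lt hb0)
          have h2 : b * (1/(2*b)) = 1/2 := by
            field_simp
          linarith
        have hbε0 : 0 ≤ b * ε := le_of_lt (mul_pos hb0 hε0)
        -- s := 1 - b*ε belongs to the defining set of F ε
        have hmem : (1 - b*ε) ∈ {x : ℝ | 0 < x ∧ ∀ t ∈ Set.Icc (ε - x) ε, Q t ^ 2 ≤ x⁻¹} := by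
          refine ⟨by linarith, ?_⟩
          rintro t ⟨ht1, ht2⟩
          have hkey : Q t ^ 2 * (1 - b*ε) ≤ 1 := by
            by_cases ht : t ≤ 0
            · have htm1 : (-1:ℝ) ≤ t := by
                have h3 : ε - (1 - b*ε) = ε + b*ε - 1 := by ring
                linarith
              have hQt : Q t ≤ 1 := hQle t ⟨htm1, ht⟩
              exact mul_le_one₀ (pow_le_one₀ (hQpos t).le hQt) (by linarith) (by linarith)
            · push_neg at ht
              have htη : t < η := lt_of_le_of_lt ht2 hεη
              have hgt : (Q (0 + t) - Q 0) / t < a := hsub ⟨ht, htη⟩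
              have hQt : Q t < 1 + a * t := by
                rw [zero_add, hQ0, div_lt_iff₀ ht] at hgt
                linarith
              have hQt' : Q t ≤ 1 + a * ε := by
                have h4 := mul_le_mul_of_nonneg_left ht2 (le_of_lt ha0)
                linarith
              have hsq : Q t ^ 2 ≤ (1 + a * ε) ^ 2 := pow_le_pow_left₀ (hQpos t).le hQt' 2
              have hprod : (1 + a * ε) ^ 2 * (1 - b * ε) ≤ 1 :=
                aux_prod1 a b δ ε ha0 hb0 hδ h2ab hε0 hεD'
              have h5 : Q t ^ 2 * (1 - b*ε) ≤ (1 + a*ε)^2 * (1 - b*ε) :=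
                mul_le_mul_of_nonneg_right hsq (by linarith)
              linarith
          rw [← one_div, le_div_iff₀ (by linarith : (0:ℝ) < 1 - b*ε)]
          exact hkey
        have hsF : 1 - b*ε ≤ F ε := by
          rw [hFdef ε]
          exact le_csSup (hFbdd ε) hmem
        -- conclude the bound on the difference quotient of F
        simp only [mem_setOf_eq]
        rw [zero_add, hF0, le_div_iff₀ hε0]
        have h6 : (-2*c - δ) * ε = -(b*ε) := by rw [hbdef]; ring
        linarith
      have hle : -2*c - δ ≤
          sSup {a : ℝ | ∀ᶠ ε in nhdsWithin (0:ℝ) (Ioi 0), a ≤ (F (0 + ε) - F 0) / ε} :=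
        le_csSup hbd hev
      linarith
    · -- Q's difference quotient unbounded above: the liminf set is empty
      have hfr : ∀ B : ℝ, ∃ᶠ ε in nhdsWithin (0:ℝ) (Ioi 0), B < (Q (0 + ε) - Q 0) / ε := by
        intro B
        by_contra h
        rw [not_frequently] at h
        exact hb ⟨B, eventually_map.mpr (h.mono fun ε hε => not_lt.mp hε)⟩
      have hempty :
          {a : ℝ | ∀ᶠ ε in nhdsWithin (0:ℝ) (Ioi 0), a ≤ (F (0 + ε) - F 0) / ε} = ∅ := by
        ext a
        simp only [mem_setOf_eq, mem_empty_iff_false, iff_false]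
        intro ha
        obtain ⟨B, hB⟩ : ∃ B : ℝ, B = max 1 (2*|a| + 2) := ⟨_, rfl⟩
        have hB1 : (1:ℝ) ≤ B := hB ▸ le_max_left _ _
        have hB0 : (0:ℝ) < B := lt_of_lt_of_le one_pos hB1
        have hBa : 2*|a| + 2 ≤ B := hB ▸ le_max_right _ _
        have h1 : ∀ᶠ ε in nhdsWithin (0:ℝ) (Ioi 0), ε < 1/B :=
          (eventually_lt_nhds (by positivity)).filter_mono nhdsWithin_le_nhds
        have h2 : ∀ᶠ ε in nhdsWithin (0:ℝ) (Ioi 0), ε ∈ Ioi (0:ℝ) := eventually_mem_nhdsWithin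
        obtain ⟨ε, hgB, haf, hε1B, hε0⟩ := ((hfr B).and_eventually (ha.and (h1.and h2))).exists
        have hε0' : (0:ℝ) < ε := hε0
        have hBε : B * ε ≤ 1 := by
          have h3 := mul_le_mul_of_nonneg_left (le_of_lt hε1B) (le_of_lt hB0)
          have h4 : B * (1/B) = 1 := by field_simp
          linarith
        have hBε0 : 0 ≤ B * ε := le_of_lt (mul_pos hB0 hε0')
        have hQε : 1 + B * ε < Q ε := by
          rw [zero_add, hQ0, lt_div_iff₀ hε0'] at hgB
          linarith
        have hQε0 : (0:ℝ) < 1 + B * ε := by linarith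
        have hF1 : F ε ≤ ((Q ε) ^ 2)⁻¹ := hFub ε
        have hF2 : ((Q ε) ^ 2)⁻¹ ≤ ((1 + B*ε)^2)⁻¹ :=
          inv_anti₀ (pow_pos hQε0 2) (pow_le_pow_left₀ hQε0.le hQε.le 2)
        have hF3 : ((1 + B*ε)^2)⁻¹ ≤ 1 - (3/4) * (B*ε) := aux_inv2 (B*ε) hBε0 hBε
        have hfε : (F (0 + ε) - F 0) / ε ≤ -(3/4) * B := by
          rw [zero_add, hF0, div_le_iff₀ hε0']
          have h7 : -(3/4) * B * ε = -((3/4) * (B * ε)) := by ring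
          linarith
        have h4 : a ≤ -(3/4) * B := le_trans haf hfε
        have h5 : -|a| ≤ a := neg_abs_le a
        linarith [abs_nonneg a]
      rw [hdl, hempty, Real.sSup_empty]
      exact min_le_left _ _
  · rw [hdl, Real.sSup_of_not_bddAbove hbd]
    exact min_le_left _ _
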